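/- Consider the recursion X^{j+1} = (D + E^j) X^j on a finite-dimensional Hilbert space V, where D ∈ L(V) is deterministic, X^0 is F_0-measurable and square-integrable, each E^j is an L(V)-valued random variable that is F_{t_{j+1}}-measurable with E[E^j | F_{t_j}] = 0 and E[E^j ⊗ E^j | F_{t_j}] = E[E^j ⊗ E^j]. Then E[X^{j+1} ⊗ X^{j+1}] = S_j ⋯ S_0 E[X^0 ⊗ X^0], where S_j = D ⊗ D + E[E^j ⊗ E^j] ∈ L(V ⊗ V). -/

import Mathlib

open MeasureTheory Filter
open scoped Kronecker

private lemma memL2_mul_integrable {Ω : Type*} {m0 : MeasurableSpace Ω} {μ : Measure Ω}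
    {f g : Ω → ℝ} (hf : MemLp f 2 μ) (hg : MemLp g 2 μ) :
    Integrable (fun ω => f ω * g ω) μ := by
  have h : MemLp (f • g) 1 μ :=
    hg.smul hf
  have h2 := memLp_one_iff_integrable.mp h
  exact h2

/-- Consider the recursion `X^{j+1} = (D + E^j) X^j` on a finite-dimensional
Hilbert space `V = ℝ^N` (operators written as matrices in an orthonormal basis), where `D` is
deterministic, `X^0` is `F_0`-measurable and square-integrable, each `E^j` is
`F_{t_{j+1}}`-measurable with `E[E^j | F_{t_j}] = 0` and
`E[E^j ⊗ E^j | F_{t_j}] = E[E^j ⊗ E^j]` (entrywise, the tensor `E^j ⊗ E^j` being the Kronecker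
square acting on `V ⊗ V = ℝ^{N×N}`). All random variables are square-integrable so that all
tensor expectations exist. Then `E[X^{j+1} ⊗ X^{j+1}] = S_j ⋯ S_0 E[X^0 ⊗ X^0]`, where
`S_j = D ⊗ D + E[E^j ⊗ E^j]`. -/
theorem stmt2
    {Ω : Type*} {m0 : MeasurableSpace Ω} (μ : Measure Ω) [IsProbabilityMeasure μ]
    (ℱ : Filtration ℕ m0) (N : ℕ)
    (D : Matrix (Fin N) (Fin N) ℝ)
    (E : ℕ → Ω → Matrix (Fin N) (Fin N) ℝ)
    (X : ℕ → Ω → Fin N → ℝ)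
    (hrec : ∀ j ω, X (j + 1) ω = (D + E j ω).mulVec (X j ω))
    (hmeasE : ∀ j k l, StronglyMeasurable[ℱ (j + 1)] fun ω => E j ω k l)
    (hL2E : ∀ j k l, MemLp (fun ω => E j ω k l) 2 μ)
    (hmean : ∀ j k l, μ[(fun ω => E j ω k l) | ℱ j] =ᵐ[μ] 0)
    (hcov : ∀ j (p q : Fin N × Fin N),
      μ[(fun ω => (E j ω ⊗ₖ E j ω) p q) | ℱ j]
        =ᵐ[μ] fun _ => ∫ ω, (E j ω ⊗ₖ E j ω) p q ∂μ)
    (hmeasX0 : ∀ k, StronglyMeasurable[ℱ 0] fun ω => X 0 ω k)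
    (hL2X : ∀ j k, MemLp (fun ω => X j ω k) 2 μ)
    (hint1 : ∀ j k l (p : Fin N × Fin N),
      Integrable (fun ω => E j ω k l * (X j ω p.1 * X j ω p.2)) μ)
    (hint2 : ∀ j (p q : Fin N × Fin N),
      Integrable (fun ω => (E j ω ⊗ₖ E j ω) p q * (X j ω q.1 * X j ω q.2)) μ)
    (S : ℕ → Matrix (Fin N × Fin N) (Fin N × Fin N) ℝ)
    (hS : ∀ j, S j = D ⊗ₖ D + Matrix.of fun p q => ∫ ω, (E j ω ⊗ₖ E j ω) p q ∂μ)
    (P : ℕ → Matrix (Fin N × Fin N) (Fin N × Fin N) ℝ)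
    (hP0 : P 0 = S 0) (hPs : ∀ j, P (j + 1) = S (j + 1) * P j) :
    ∀ j, (fun p : Fin N × Fin N => ∫ ω, X (j + 1) ω p.1 * X (j + 1) ω p.2 ∂μ)
      = (P j).mulVec (fun p : Fin N × Fin N => ∫ ω, X 0 ω p.1 * X 0 ω p.2 ∂μ) := by
  -- X j is ℱ j-measurable
  have hmeasX : ∀ j k, StronglyMeasurable[ℱ j] fun ω => X j ω k := by
    intro j
    induction j with
    | zero => exact hmeasX0
    | succ j ih =>
      intro k
      have : (fun ω => X (j + 1) ω k)
          = fun ω => ∑ l, (D k l + E j ω k l) * X j ω l := by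
        funext ω
        rw [hrec]
        simp [Matrix.mulVec, dotProduct, Matrix.add_apply]
      rw [this]
      exact Finset.stronglyMeasurable_fun_sum _ fun l _ =>
        ((stronglyMeasurable_const.add (hmeasE j k l)).mul
          ((ih l).mono (ℱ.mono (Nat.le_succ j))))
  -- integrability of X j q.1 * X j q.2
  have hintXX : ∀ j (q : Fin N × Fin N),
      Integrable (fun ω => X j ω q.1 * X j ω q.2) μ :=
    fun j q => memL2_mul_integrable (hL2X j q.1) (hL2X j q.2)
  -- cross terms vanish
  have hcross : ∀ j k l (q : Fin N × Fin N),
      ∫ ω, E j ω k l * (X j ω q.1 * X j ω q.2) ∂μ = 0 := by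
    intro j k l q
    set g : Ω → ℝ := fun ω => X j ω q.1 * X j ω q.2 with hgdef
    have hg : StronglyMeasurable[ℱ j] g := (hmeasX j q.1).mul (hmeasX j q.2)
    have hf : Integrable (fun ω => E j ω k l) μ :=
      (hL2E j k l).integrable one_le_two
    have hgf : Integrable (g * fun ω => E j ω k l) μ := by
      have := hint1 j k l q
      simpa [hgdef, mul_comm, funext_iff, Pi.mul_def] using this
    have h1 := condExp_mul_of_stronglyMeasurable_left (m := ℱ j) hg hgf hf
    have h0 : μ[g * fun ω => E j ω k l | ℱ j] =ᵐ[μ] 0 := by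
      refine h1.trans ?_
      filter_upwards [hmean j k l] with ω hω
      simp [Pi.mul_apply, hω]
    calc ∫ ω, E j ω k l * (X j ω q.1 * X j ω q.2) ∂μ
        = ∫ ω, (g * fun ω => E j ω k l) ω ∂μ := by
          apply integral_congr_ae
          filter_upwards with ω
          simp [hgdef, mul_comm]
      _ = ∫ ω, (μ[g * fun ω => E j ω k l | ℱ j]) ω ∂μ :=
          (integral_condExp (ℱ.le j)).symm
      _ = ∫ ω, (0 : Ω → ℝ) ω ∂μ := integral_congr_ae h0
      _ = 0 := by simp
  -- quadratic term
  have hquad : ∀ j (p q : Fin N × Fin N),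
      ∫ ω, (E j ω ⊗ₖ E j ω) p q * (X j ω q.1 * X j ω q.2) ∂μ
        = (∫ ω, (E j ω ⊗ₖ E j ω) p q ∂μ) * ∫ ω, X j ω q.1 * X j ω q.2 ∂μ := by
    intro j p q
    set g : Ω → ℝ := fun ω => X j ω q.1 * X j ω q.2 with hgdef
    set c : ℝ := ∫ ω, (E j ω ⊗ₖ E j ω) p q ∂μ with hcdef
    have hg : StronglyMeasurable[ℱ j] g := (hmeasX j q.1).mul (hmeasX j q.2)
    have hf : Integrable (fun ω => (E j ω ⊗ₖ E j ω) p q) μ := by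
      have hform : ∀ ω, (E j ω ⊗ₖ E j ω) p q = E j ω p.1 q.1 * E j ω p.2 q.2 :=
        fun ω => rfl
      simp only [hform]
      exact memL2_mul_integrable (hL2E j p.1 q.1) (hL2E j p.2 q.2)
    have hgf : Integrable (g * fun ω => (E j ω ⊗ₖ E j ω) p q) μ := by
      have := hint2 j p q
      simpa [hgdef, mul_comm, Pi.mul_def] using this
    have h1 := condExp_mul_of_stronglyMeasurable_left (m := ℱ j) hg hgf hf
    have h0 : μ[g * fun ω => (E j ω ⊗ₖ E j ω) p q | ℱ j]
        =ᵐ[μ] fun ω => g ω * c := by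
      refine h1.trans ?_
      filter_upwards [hcov j p q] with ω hω
      rw [Pi.mul_apply, hω]
    calc ∫ ω, (E j ω ⊗ₖ E j ω) p q * (X j ω q.1 * X j ω q.2) ∂μ
        = ∫ ω, (g * fun ω => (E j ω ⊗ₖ E j ω) p q) ω ∂μ := by
          apply integral_congr_ae
          filter_upwards with ω
          simp [hgdef, mul_comm]
      _ = ∫ ω, (μ[g * fun ω => (E j ω ⊗ₖ E j ω) p q | ℱ j]) ω ∂μ :=
          (integral_condExp (ℱ.le j)).symm
      _ = ∫ ω, g ω * c ∂μ := integral_congr_ae h0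
      _ = c * ∫ ω, g ω ∂μ := by rw [integral_mul_const]; ring
  -- the one-step recursion for second moments
  have hstep : ∀ j, (fun p : Fin N × Fin N => ∫ ω, X (j + 1) ω p.1 * X (j + 1) ω p.2 ∂μ)
      = (S j).mulVec (fun p : Fin N × Fin N => ∫ ω, X j ω p.1 * X j ω p.2 ∂μ) := by
    intro j
    funext p
    obtain ⟨a, b⟩ := p
    have hpt : (fun ω => X (j + 1) ω a * X (j + 1) ω b)
        = fun ω => ∑ q : Fin N × Fin N,
          (D a q.1 * D b q.2 * (X j ω q.1 * X j ω q.2)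
            + D a q.1 * (E j ω b q.2 * (X j ω q.1 * X j ω q.2))
            + D b q.2 * (E j ω a q.1 * (X j ω q.1 * X j ω q.2))
            + (E j ω ⊗ₖ E j ω) (a, b) q * (X j ω q.1 * X j ω q.2)) := by
      funext ω
      rw [hrec]
      simp only [Matrix.mulVec, dotProduct, Matrix.add_apply]
      rw [Finset.sum_mul_sum, Fintype.sum_prod_type]
      refine Finset.sum_congr rfl fun k _ => Finset.sum_congr rfl fun l _ => ?_
      simp only [Matrix.kroneckerMap_apply]
      ring
    have hintq : ∀ q : Fin N × Fin N, Integrable (fun ω =>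
        D a q.1 * D b q.2 * (X j ω q.1 * X j ω q.2)
          + D a q.1 * (E j ω b q.2 * (X j ω q.1 * X j ω q.2))
          + D b q.2 * (E j ω a q.1 * (X j ω q.1 * X j ω q.2))
          + (E j ω ⊗ₖ E j ω) (a, b) q * (X j ω q.1 * X j ω q.2)) μ := by
      intro q
      exact ((((hintXX j q).const_mul _).add ((hint1 j b q.2 q).const_mul _)).add
        ((hint1 j a q.1 q).const_mul _)).add (hint2 j (a, b) q)
    show (∫ ω, X (j + 1) ω a * X (j + 1) ω b ∂μ) = _
    rw [hpt, integral_finset_sum _ fun q _ => hintq q]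
    simp only [Matrix.mulVec, dotProduct]
    refine Finset.sum_congr rfl fun q _ => ?_
    have i1 : Integrable (fun ω => D a q.1 * D b q.2 * (X j ω q.1 * X j ω q.2)) μ :=
      (hintXX j q).const_mul _
    have i2 : Integrable
        (fun ω => D a q.1 * (E j ω b q.2 * (X j ω q.1 * X j ω q.2))) μ :=
      (hint1 j b q.2 q).const_mul _
    have i3 : Integrable
        (fun ω => D b q.2 * (E j ω a q.1 * (X j ω q.1 * X j ω q.2))) μ :=
      (hint1 j a q.1 q).const_mul _
    have i4 := hint2 j (a, b) q
    have i12 : Integrable (fun ω =>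
        D a q.1 * D b q.2 * (X j ω q.1 * X j ω q.2)
          + D a q.1 * (E j ω b q.2 * (X j ω q.1 * X j ω q.2))) μ := i1.add i2
    have i123 : Integrable (fun ω =>
        D a q.1 * D b q.2 * (X j ω q.1 * X j ω q.2)
          + D a q.1 * (E j ω b q.2 * (X j ω q.1 * X j ω q.2))
          + D b q.2 * (E j ω a q.1 * (X j ω q.1 * X j ω q.2))) μ := i12.add i3
    rw [integral_add i123 i4, integral_add i12 i3, integral_add i1 i2,
        integral_const_mul, integral_const_mul, integral_const_mul,
        hcross j b q.2 q, hcross j a q.1 q, hquad j (a, b) q, hS]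
    simp only [Matrix.add_apply, Matrix.kroneckerMap_apply, Matrix.of_apply]
    ring
  intro j
  induction j with
  | zero => rw [hP0]; exact hstep 0
  | succ j ih =>
    rw [hPs, ← Matrix.mulVec_mulVec, ← ih]
    exact hstep (j + 1)
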